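/- arXiv:1205.0856 — 9 statements merged into one kernel-verified Lean document; each statement's English description precedes it below -/
import Mathlib

section
/- (Weak duality.) Let y ∈ ℝ^K satisfy Dy ≤ b, Hy = e_n, and y ∘ (y − e_K) ≤ 0. Let σ ∈ ℝ^m with σ ≥ 0, τ ∈ ℝⁿ, and μ ∈ ℝ^K with μ ≥ 0 and G(μ) positive definite. Then P^d(σ,τ,μ) ≤ ½ yᵀBy − hᵀy. -/
open Matrix BigOperators

/-- Weak duality. For any primal feasible `y` and any dual feasible
`(σ,τ,μ)` with `G(μ)` positive definite, `P^d(σ,τ,μ) ≤ ½ yᵀBy − hᵀy`. -/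
theorem stmt5
    (n m K : ℕ) (hn : 0 < n) (hm : 0 < m) (hK : 0 < K)
    (B : Matrix (Fin K) (Fin K) ℝ) (hB : B.IsSymm)
    (h : Fin K → ℝ) (D : Matrix (Fin m) (Fin K) ℝ) (b : Fin m → ℝ)
    (H : Matrix (Fin n) (Fin K) ℝ)
    (G : (Fin K → ℝ) → Matrix (Fin K) (Fin K) ℝ)
    (hG : ∀ μ, G μ = B + (2 : ℝ) • Matrix.diagonal μ)
    (F : (Fin m → ℝ) → (Fin n → ℝ) → (Fin K → ℝ) → (Fin K → ℝ))
    (hF : ∀ σ τ μ, F σ τ μ = h - Dᵀ.mulVec σ - Hᵀ.mulVec τ + μ)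
    (y : Fin K → ℝ)
    (hy1 : D.mulVec y ≤ b)
    (hy2 : H.mulVec y = (1 : Fin n → ℝ))
    (hy3 : y * (y - (1 : Fin K → ℝ)) ≤ 0)
    (σ : Fin m → ℝ) (hσ : 0 ≤ σ)
    (τ : Fin n → ℝ)
    (μ : Fin K → ℝ) (hμ : 0 ≤ μ)
    (hpos : (G μ).PosDef) :
    -(1 / 2) * ((F σ τ μ) ⬝ᵥ (G μ)⁻¹.mulVec (F σ τ μ)) - σ ⬝ᵥ b - τ ⬝ᵥ (1 : Fin n → ℝ)
      ≤ (1 / 2) * (y ⬝ᵥ B.mulVec y) - h ⬝ᵥ y := by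
  set Gm := G μ with hGm
  set f := F σ τ μ with hf
  have hdet : IsUnit Gm.det := isUnit_iff_ne_zero.mpr hpos.det_pos.ne'
  have hGi : Gm * Gm⁻¹ = 1 := Matrix.mul_nonsing_inv _ hdet
  have hiG : Gm⁻¹ * Gm = 1 := Matrix.nonsing_inv_mul _ hdet
  have hsymm : Gmᵀ = Gm := by
    rw [hGm, hG]
    simp [Matrix.transpose_add, Matrix.transpose_smul, hB.eq]
  have hisymm : Gm⁻¹ᵀ = Gm⁻¹ := by
    rw [Matrix.transpose_nonsing_inv, hsymm]
  -- swap lemma for symmetric matrix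
  have swap : ∀ (M : Matrix (Fin K) (Fin K) ℝ), Mᵀ = M →
      ∀ u v : Fin K → ℝ, u ⬝ᵥ M.mulVec v = v ⬝ᵥ M.mulVec u := by
    intro M hM u v
    rw [Matrix.dotProduct_mulVec, ← Matrix.mulVec_transpose, hM, dotProduct_comm]
  set z := y - Gm⁻¹.mulVec f with hzdef
  have hz : 0 ≤ z ⬝ᵥ Gm.mulVec z := by
    have := hpos.posSemidef.dotProduct_mulVec_nonneg z
    simpa using this
  have expand : z ⬝ᵥ Gm.mulVec z
      = y ⬝ᵥ Gm.mulVec y - 2 * (f ⬝ᵥ y) + f ⬝ᵥ Gm⁻¹.mulVec f := by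
    have h1 : Gm.mulVec (Gm⁻¹.mulVec f) = f := by
      rw [Matrix.mulVec_mulVec, hGi, Matrix.one_mulVec]
    have h2 : y ⬝ᵥ Gm.mulVec (Gm⁻¹.mulVec f) = f ⬝ᵥ y := by
      rw [h1, dotProduct_comm]
    have h3 : (Gm⁻¹.mulVec f) ⬝ᵥ Gm.mulVec y = f ⬝ᵥ y := by
      rw [swap Gm hsymm, h1, dotProduct_comm]
    have h4 : (Gm⁻¹.mulVec f) ⬝ᵥ Gm.mulVec (Gm⁻¹.mulVec f) = f ⬝ᵥ Gm⁻¹.mulVec f := by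
      rw [h1, dotProduct_comm]
    rw [hzdef, Matrix.mulVec_sub, dotProduct_sub, sub_dotProduct,
      sub_dotProduct, h2, h3, h4]
    ring
  have key : -(1/2) * (f ⬝ᵥ Gm⁻¹.mulVec f) ≤ (1/2) * (y ⬝ᵥ Gm.mulVec y) - f ⬝ᵥ y := by
    nlinarith [hz, expand]
  -- expand f ⬝ᵥ y
  have hfy : f ⬝ᵥ y = h ⬝ᵥ y - σ ⬝ᵥ D.mulVec y - τ ⬝ᵥ (1 : Fin n → ℝ) + μ ⬝ᵥ y := by
    rw [hf, hF]
    rw [add_dotProduct, sub_dotProduct, sub_dotProduct]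
    congr 1
    congr 1
    congr 1
    · rw [Matrix.mulVec_transpose, ← Matrix.dotProduct_mulVec]
    · rw [Matrix.mulVec_transpose, ← Matrix.dotProduct_mulVec, hy2]
  -- expand y ⬝ᵥ Gm y
  have hGy : y ⬝ᵥ Gm.mulVec y = y ⬝ᵥ B.mulVec y + 2 * (μ ⬝ᵥ (y * y)) := by
    rw [hGm, hG, Matrix.add_mulVec, dotProduct_add, Matrix.smul_mulVec,
      dotProduct_smul]
    congr 1
    have : y ⬝ᵥ (Matrix.diagonal μ).mulVec y = μ ⬝ᵥ (y * y) := by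
      simp [dotProduct, Matrix.mulVec_diagonal, Pi.mul_apply]
      exact Finset.sum_congr rfl (fun i _ => by ring)
    rw [this]; simp [smul_eq_mul]
  have hσterm : σ ⬝ᵥ D.mulVec y - σ ⬝ᵥ b ≤ 0 := by
    rw [← dotProduct_sub]
    apply Finset.sum_nonpos
    intro i _
    exact mul_nonpos_of_nonneg_of_nonpos (hσ i) (by simpa using sub_nonpos.mpr (hy1 i))
  have hμterm : μ ⬝ᵥ (y * y) - μ ⬝ᵥ y ≤ 0 := by
    rw [← dotProduct_sub]
    apply Finset.sum_nonpos
    intro i _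
    have := hy3 i
    simp only [Pi.mul_apply, Pi.sub_apply, Pi.one_apply, Pi.zero_apply] at this
    have : μ i * (y i * y i - y i) ≤ 0 := by
      apply mul_nonpos_of_nonneg_of_nonpos (hμ i)
      nlinarith
    simpa [Pi.sub_apply, Pi.mul_apply] using this
  linarith [key, hfy, hGy, hσterm, hμterm]
end

section
/- (Complementary-dual principle: equality of objective values.) Suppose σ̄ ∈ ℝ^m, τ̄ ∈ ℝⁿ, μ̄ ∈ ℝ^K satisfy σ̄ ≥ 0 and that G(μ̄) is invertible, and set ȳ = G(μ̄)⁻¹ F(σ̄,τ̄,μ̄). If Hȳ = e_n, ȳ ∘ (ȳ − e_K) = 0, and σ̄ᵀ(Dȳ − b) = 0, then ½ ȳᵀBȳ − hᵀȳ = P^d(σ̄,τ̄,μ̄). -/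
open Matrix BigOperators

/-- Complementary-dual principle (equality of objective values).
If `ȳ = G(μ̄)⁻¹F(σ̄,τ̄,μ̄)` satisfies `Hȳ = eₙ`, `ȳ ∘ (ȳ − e_K) = 0` and the
complementary slackness condition `σ̄ᵀ(Dȳ − b) = 0`, then
`½ ȳᵀBȳ − hᵀȳ = P^d(σ̄,τ̄,μ̄)`. -/
theorem stmt6
    (n m K : ℕ) (hn : 0 < n) (hm : 0 < m) (hK : 0 < K)
    (B : Matrix (Fin K) (Fin K) ℝ) (hB : B.IsSymm)
    (h : Fin K → ℝ) (D : Matrix (Fin m) (Fin K) ℝ) (b : Fin m → ℝ)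
    (H : Matrix (Fin n) (Fin K) ℝ)
    (G : (Fin K → ℝ) → Matrix (Fin K) (Fin K) ℝ)
    (hG : ∀ μ, G μ = B + (2 : ℝ) • Matrix.diagonal μ)
    (F : (Fin m → ℝ) → (Fin n → ℝ) → (Fin K → ℝ) → (Fin K → ℝ))
    (hF : ∀ σ τ μ, F σ τ μ = h - Dᵀ.mulVec σ - Hᵀ.mulVec τ + μ)
    (σbar : Fin m → ℝ) (τbar : Fin n → ℝ) (μbar : Fin K → ℝ)
    (hσ : 0 ≤ σbar)
    (hinv : IsUnit (G μbar).det)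
    (ybar : Fin K → ℝ)
    (hybar : ybar = (G μbar)⁻¹.mulVec (F σbar τbar μbar))
    (hfeas2 : H.mulVec ybar = (1 : Fin n → ℝ))
    (hfeas3 : ybar * (ybar - (1 : Fin K → ℝ)) = 0)
    (hslack : σbar ⬝ᵥ (D.mulVec ybar - b) = 0) :
    (1 / 2) * (ybar ⬝ᵥ B.mulVec ybar) - h ⬝ᵥ ybar
      = -(1 / 2) * ((F σbar τbar μbar) ⬝ᵥ (G μbar)⁻¹.mulVec (F σbar τbar μbar))
        - σbar ⬝ᵥ b - τbar ⬝ᵥ (1 : Fin n → ℝ) := by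
  have hGy : (G μbar).mulVec ybar = F σbar τbar μbar := by
    rw [hybar, Matrix.mulVec_mulVec, Matrix.mul_nonsing_inv _ hinv, Matrix.one_mulVec]
  have hsq : ybar * ybar = ybar := by
    have := hfeas3
    rw [mul_sub, mul_one, sub_eq_zero] at this
    exact this
  have hdiag : (Matrix.diagonal μbar).mulVec ybar = μbar * ybar := by
    funext i; simp [Matrix.mulVec_diagonal]
  have h1 : F σbar τbar μbar ⬝ᵥ ybar = ybar ⬝ᵥ B.mulVec ybar + 2 * (μbar ⬝ᵥ ybar) := by
    rw [← hGy, hG, Matrix.add_mulVec, Matrix.smul_mulVec, hdiag,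
      add_dotProduct, smul_dotProduct, dotProduct_comm]
    congr 1
    have : (μbar * ybar) ⬝ᵥ ybar = μbar ⬝ᵥ (ybar * ybar) := by
      simp [dotProduct, Finset.mul_sum]
      apply Finset.sum_congr rfl
      intro i _
      ring
    rw [smul_eq_mul, this, hsq]
  have hDy : σbar ⬝ᵥ D.mulVec ybar = σbar ⬝ᵥ b := by
    have := hslack
    rw [dotProduct_sub, sub_eq_zero] at this
    exact this
  have hHy : τbar ⬝ᵥ H.mulVec ybar = τbar ⬝ᵥ (1 : Fin n → ℝ) := by rw [hfeas2]
  have h2 : F σbar τbar μbar ⬝ᵥ ybar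
      = h ⬝ᵥ ybar - σbar ⬝ᵥ b - τbar ⬝ᵥ (1 : Fin n → ℝ) + μbar ⬝ᵥ ybar := by
    rw [hF, add_dotProduct, sub_dotProduct, sub_dotProduct]
    have hdσ : Dᵀ.mulVec σbar ⬝ᵥ ybar = σbar ⬝ᵥ D.mulVec ybar := by
      rw [Matrix.mulVec_transpose, ← Matrix.dotProduct_mulVec]
    have hdτ : Hᵀ.mulVec τbar ⬝ᵥ ybar = τbar ⬝ᵥ H.mulVec ybar := by
      rw [Matrix.mulVec_transpose, ← Matrix.dotProduct_mulVec]
    rw [hdσ, hdτ, hDy, hHy]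
  rw [← hybar]
  linarith [h1, h2]
end

section
/- (Global optimality.) Suppose σ̄ ∈ ℝ^m, τ̄ ∈ ℝⁿ, μ̄ ∈ ℝ^K satisfy σ̄ ≥ 0, μ̄ ≥ 0, and G(μ̄) is positive definite, and set ȳ = G(μ̄)⁻¹ F(σ̄,τ̄,μ̄). If Dȳ ≤ b, Hȳ = e_n, ȳ ∘ (ȳ − e_K) ≤ 0, σ̄ᵀ(Dȳ − b) = 0, and μ̄ᵀ(ȳ ∘ (ȳ − e_K)) = 0, then ȳ is a global minimizer of P(y) = ½ yᵀBy − hᵀy over the feasible set Y = {y ∈ ℝ^K : Dy ≤ b, Hy = e_n, y ∘ (y − e_K) ≤ 0}, and P(ȳ) = P^d(σ̄,τ̄,μ̄). -/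
open Matrix BigOperators

/-- Global optimality. Under the KKT-type conditions, the point
`ȳ = G(μ̄)⁻¹F(σ̄,τ̄,μ̄)` is a global minimizer of `P(y) = ½ yᵀBy − hᵀy` over the
feasible set `Y`, and `P(ȳ) = P^d(σ̄,τ̄,μ̄)`. -/
theorem stmt7
    (n m K : ℕ) (hn : 0 < n) (hm : 0 < m) (hK : 0 < K)
    (B : Matrix (Fin K) (Fin K) ℝ) (hB : B.IsSymm)
    (h : Fin K → ℝ) (D : Matrix (Fin m) (Fin K) ℝ) (b : Fin m → ℝ)
    (H : Matrix (Fin n) (Fin K) ℝ)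
    (G : (Fin K → ℝ) → Matrix (Fin K) (Fin K) ℝ)
    (hG : ∀ μ, G μ = B + (2 : ℝ) • Matrix.diagonal μ)
    (F : (Fin m → ℝ) → (Fin n → ℝ) → (Fin K → ℝ) → (Fin K → ℝ))
    (hF : ∀ σ τ μ, F σ τ μ = h - Dᵀ.mulVec σ - Hᵀ.mulVec τ + μ)
    (P : (Fin K → ℝ) → ℝ)
    (hP : ∀ y, P y = (1 / 2) * (y ⬝ᵥ B.mulVec y) - h ⬝ᵥ y)
    (Y : Set (Fin K → ℝ))
    (hY : Y = {y | D.mulVec y ≤ b ∧ H.mulVec y = (1 : Fin n → ℝ)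
        ∧ y * (y - (1 : Fin K → ℝ)) ≤ 0})
    (σbar : Fin m → ℝ) (τbar : Fin n → ℝ) (μbar : Fin K → ℝ)
    (hσ : 0 ≤ σbar) (hμ : 0 ≤ μbar)
    (hpos : (G μbar).PosDef)
    (ybar : Fin K → ℝ)
    (hybar : ybar = (G μbar)⁻¹.mulVec (F σbar τbar μbar))
    (hfeas1 : D.mulVec ybar ≤ b)
    (hfeas2 : H.mulVec ybar = (1 : Fin n → ℝ))
    (hfeas3 : ybar * (ybar - (1 : Fin K → ℝ)) ≤ 0)
    (hslack1 : σbar ⬝ᵥ (D.mulVec ybar - b) = 0)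
    (hslack2 : μbar ⬝ᵥ (ybar * (ybar - (1 : Fin K → ℝ))) = 0) :
    ybar ∈ Y
    ∧ (∀ y ∈ Y, P ybar ≤ P y)
    ∧ P ybar = -(1 / 2) * ((F σbar τbar μbar) ⬝ᵥ (G μbar)⁻¹.mulVec (F σbar τbar μbar))
        - σbar ⬝ᵥ b - τbar ⬝ᵥ (1 : Fin n → ℝ) := by
  set Gm := G μbar with hGm
  set Fv := F σbar τbar μbar with hFvdef
  -- symmetry of Gm
  have hGsymm : Gmᵀ = Gm := by
    rw [hGm, hG]
    simp [Matrix.transpose_add, Matrix.transpose_smul, hB.eq]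
  -- Gm ybar = Fv
  have hGy : Gm.mulVec ybar = Fv := by
    rw [hybar, Matrix.mulVec_mulVec, Matrix.mul_nonsing_inv _ hpos.det_pos.ne'.isUnit,
      Matrix.one_mulVec]
  -- symmetric bilinear form
  have hsymm : ∀ u v : Fin K → ℝ, u ⬝ᵥ Gm.mulVec v = v ⬝ᵥ Gm.mulVec u := by
    intro u v
    rw [Matrix.dotProduct_mulVec, ← Matrix.mulVec_transpose, hGsymm, dotProduct_comm]
  -- diagonal quadratic term
  have hdiag : ∀ y : Fin K → ℝ,
      μbar ⬝ᵥ (y * (y - (1 : Fin K → ℝ))) = y ⬝ᵥ (Matrix.diagonal μbar).mulVec y - μbar ⬝ᵥ y := by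
    intro y
    rw [dotProduct, dotProduct, dotProduct, ← Finset.sum_sub_distrib]
    refine Finset.sum_congr rfl fun i _ => ?_
    simp [Matrix.mulVec_diagonal]
    ring
  -- Lagrangian identity
  have hLag : ∀ y : Fin K → ℝ,
      P y + σbar ⬝ᵥ (D.mulVec y - b) + τbar ⬝ᵥ (H.mulVec y - 1)
        + μbar ⬝ᵥ (y * (y - (1 : Fin K → ℝ)))
      = (1 / 2) * (y ⬝ᵥ Gm.mulVec y) - Fv ⬝ᵥ y - σbar ⬝ᵥ b - τbar ⬝ᵥ 1 := by
    intro y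
    have e1 : σbar ⬝ᵥ D.mulVec y = (Dᵀ.mulVec σbar) ⬝ᵥ y := by
      rw [Matrix.dotProduct_mulVec, ← Matrix.mulVec_transpose]
    have e2 : τbar ⬝ᵥ H.mulVec y = (Hᵀ.mulVec τbar) ⬝ᵥ y := by
      rw [Matrix.dotProduct_mulVec, ← Matrix.mulVec_transpose]
    have e3 : y ⬝ᵥ Gm.mulVec y
        = y ⬝ᵥ B.mulVec y + 2 * (y ⬝ᵥ (Matrix.diagonal μbar).mulVec y) := by
      rw [hGm, hG, Matrix.add_mulVec, dotProduct_add, Matrix.smul_mulVec,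
        dotProduct_smul, smul_eq_mul]
    rw [hP, hFvdef, hF, e3, hdiag]
    simp only [dotProduct_sub, sub_dotProduct, add_dotProduct, e1, e2]
    ring
  -- completion of square
  have hsq : ∀ y : Fin K → ℝ,
      (1 / 2) * (y ⬝ᵥ Gm.mulVec y) - Fv ⬝ᵥ y
      = (1 / 2) * ((y - ybar) ⬝ᵥ Gm.mulVec (y - ybar)) - (1 / 2) * (ybar ⬝ᵥ Gm.mulVec ybar) := by
    intro y
    have e1 : Fv ⬝ᵥ y = ybar ⬝ᵥ Gm.mulVec y := by
      rw [← hGy, dotProduct_comm, hsymm]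
    have e2 : (y - ybar) ⬝ᵥ Gm.mulVec (y - ybar)
        = y ⬝ᵥ Gm.mulVec y - 2 * (ybar ⬝ᵥ Gm.mulVec y) + ybar ⬝ᵥ Gm.mulVec ybar := by
      simp only [Matrix.mulVec_sub, dotProduct_sub, sub_dotProduct, hsymm y ybar]
      ring
    rw [e1, e2]; ring
  have hquadval : ybar ⬝ᵥ Gm.mulVec ybar = Fv ⬝ᵥ Gm⁻¹.mulVec Fv := by
    rw [hGy, dotProduct_comm, hybar]
  -- value of P at ybar
  have hPbar : P ybar = -(1 / 2) * (Fv ⬝ᵥ Gm⁻¹.mulVec Fv) - σbar ⬝ᵥ b - τbar ⬝ᵥ 1 := by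
    have := hLag ybar
    rw [hslack1, hslack2, hfeas2, sub_self, dotProduct_zero, hsq ybar, sub_self,
      Matrix.mulVec_zero, dotProduct_zero, hquadval] at this
    linarith
  refine ⟨by rw [hY]; exact ⟨hfeas1, hfeas2, hfeas3⟩, ?_, hPbar⟩
  intro y hy
  rw [hY] at hy
  obtain ⟨hy1, hy2, hy3⟩ := hy
  have hσterm : σbar ⬝ᵥ (D.mulVec y - b) ≤ 0 := by
    have := dotProduct_le_dotProduct_of_nonneg_left
      (u := D.mulVec y - b) (v := 0) (w := σbar) (by simpa using hy1) hσ
    simpa using this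
  have hμterm : μbar ⬝ᵥ (y * (y - (1 : Fin K → ℝ))) ≤ 0 := by
    have := dotProduct_le_dotProduct_of_nonneg_left
      (u := y * (y - (1 : Fin K → ℝ))) (v := 0) (w := μbar) hy3 hμ
    simpa using this
  have hquad : 0 ≤ (y - ybar) ⬝ᵥ Gm.mulVec (y - ybar) := by
    have := hpos.posSemidef.dotProduct_mulVec_nonneg (y - ybar)
    simpa using this
  have := hLag y
  rw [hy2, sub_self, dotProduct_zero, hsq y, hquadval] at this
  rw [hPbar]
  linarith
end

section
/- (Dual optimality.) Suppose σ̄ ∈ ℝ^m, τ̄ ∈ ℝⁿ, μ̄ ∈ ℝ^K satisfy σ̄ ≥ 0, μ̄ ≥ 0, and G(μ̄) is positive definite, and set ȳ = G(μ̄)⁻¹ F(σ̄,τ̄,μ̄). If Dȳ ≤ b, Hȳ = e_n, ȳ ∘ (ȳ − e_K) ≤ 0, σ̄ᵀ(Dȳ − b) = 0, and μ̄ᵀ(ȳ ∘ (ȳ − e_K)) = 0, then for every σ ∈ ℝ^m with σ ≥ 0, every τ ∈ ℝⁿ, and every μ ∈ ℝ^K with μ ≥ 0 and G(μ) positive definite,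 one has P^d(σ,τ,μ) ≤ P^d(σ̄,τ̄,μ̄); that is, (σ̄,τ̄,μ̄) is a global maximizer of P^d over this dual feasible region. -/
open Matrix BigOperators

private lemma dot_nonpos {K : ℕ} (u v : Fin K → ℝ) (hu : 0 ≤ u) (hv : v ≤ 0) :
    u ⬝ᵥ v ≤ 0 := by
  apply Finset.sum_nonpos
  intro i _
  exact mul_nonpos_of_nonneg_of_nonpos (hu i) (hv i)

private lemma diag_quad {K : ℕ} (μ y : Fin K → ℝ) :
    y ⬝ᵥ (Matrix.diagonal μ).mulVec y = μ ⬝ᵥ (y * y) := by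
  unfold dotProduct
  apply Finset.sum_congr rfl
  intro i _
  rw [Matrix.mulVec_diagonal]
  simp [Pi.mul_apply]
  ring

private lemma transpose_dot {m K : ℕ} (D : Matrix (Fin m) (Fin K) ℝ)
    (σ : Fin m → ℝ) (y : Fin K → ℝ) :
    (Dᵀ.mulVec σ) ⬝ᵥ y = σ ⬝ᵥ (D.mulVec y) := by
  rw [Matrix.mulVec_transpose, dotProduct_mulVec]

/-- Key quadratic bound: for `M` symmetric positive definite,
`-(1/2) fᵀM⁻¹f ≤ (1/2) yᵀMy - fᵀy` for all `y`, with equality at `y = M⁻¹f`. -/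
private lemma quad_bound {K : ℕ} (M : Matrix (Fin K) (Fin K) ℝ)
    (hpd : M.PosDef) (hs : M.IsSymm) (f y : Fin K → ℝ) :
    -(1 / 2) * (f ⬝ᵥ M⁻¹.mulVec f) ≤ (1 / 2) * (y ⬝ᵥ M.mulVec y) - f ⬝ᵥ y := by
  set w : Fin K → ℝ := M⁻¹.mulVec f with hw
  have hdet : IsUnit M.det := isUnit_iff_ne_zero.mpr hpd.det_pos.ne'
  have hMw : M.mulVec w = f := by
    rw [hw, Matrix.mulVec_mulVec, Matrix.mul_nonsing_inv M hdet, Matrix.one_mulVec]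
  have h0 : (0:ℝ) ≤ (y - w) ⬝ᵥ M.mulVec (y - w) := hpd.posSemidef.dotProduct_mulVec_nonneg (y - w)
  have hexp : (y - w) ⬝ᵥ M.mulVec (y - w)
      = y ⬝ᵥ M.mulVec y - 2 * (f ⬝ᵥ y) + f ⬝ᵥ w := by
    rw [Matrix.mulVec_sub, dotProduct_sub, sub_dotProduct,
        sub_dotProduct]
    have h1 : y ⬝ᵥ M.mulVec w = f ⬝ᵥ y := by
      rw [hMw, dotProduct_comm]
    have h2 : w ⬝ᵥ M.mulVec y = f ⬝ᵥ y := by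
      rw [dotProduct_mulVec, ← Matrix.mulVec_transpose, hs.eq, hMw]
    have h3 : w ⬝ᵥ M.mulVec w = f ⬝ᵥ w := by
      rw [hMw, dotProduct_comm]
    rw [h1, h2, h3]; ring
  have hfw : f ⬝ᵥ M⁻¹.mulVec f = f ⬝ᵥ w := rfl
  rw [hfw]
  nlinarith [h0, hexp]

private lemma quad_eq {K : ℕ} (M : Matrix (Fin K) (Fin K) ℝ)
    (hpd : M.PosDef) (hs : M.IsSymm) (f : Fin K → ℝ) :
    -(1 / 2) * (f ⬝ᵥ M⁻¹.mulVec f)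
      = (1 / 2) * ((M⁻¹.mulVec f) ⬝ᵥ M.mulVec (M⁻¹.mulVec f)) - f ⬝ᵥ (M⁻¹.mulVec f) := by
  set w : Fin K → ℝ := M⁻¹.mulVec f with hw
  have hdet : IsUnit M.det := isUnit_iff_ne_zero.mpr hpd.det_pos.ne'
  have hMw : M.mulVec w = f := by
    rw [hw, Matrix.mulVec_mulVec, Matrix.mul_nonsing_inv M hdet, Matrix.one_mulVec]
  have h3 : w ⬝ᵥ M.mulVec w = f ⬝ᵥ w := by
    rw [hMw, dotProduct_comm]
  rw [h3]; ring

/-- Dual optimality. Under the KKT-type conditions at `(σ̄,τ̄,μ̄)`,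
the point `(σ̄,τ̄,μ̄)` is a global maximizer of the canonical dual function `P^d`
over the dual feasible region `{(σ,τ,μ) : σ ≥ 0, μ ≥ 0, G(μ) ≻ 0}`. -/
theorem stmt8
    (n m K : ℕ) (hn : 0 < n) (hm : 0 < m) (hK : 0 < K)
    (B : Matrix (Fin K) (Fin K) ℝ) (hB : B.IsSymm)
    (h : Fin K → ℝ) (D : Matrix (Fin m) (Fin K) ℝ) (b : Fin m → ℝ)
    (H : Matrix (Fin n) (Fin K) ℝ)
    (G : (Fin K → ℝ) → Matrix (Fin K) (Fin K) ℝ)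
    (hG : ∀ μ, G μ = B + (2 : ℝ) • Matrix.diagonal μ)
    (F : (Fin m → ℝ) → (Fin n → ℝ) → (Fin K → ℝ) → (Fin K → ℝ))
    (hF : ∀ σ τ μ, F σ τ μ = h - Dᵀ.mulVec σ - Hᵀ.mulVec τ + μ)
    (Pd : (Fin m → ℝ) → (Fin n → ℝ) → (Fin K → ℝ) → ℝ)
    (hPd : ∀ σ τ μ, Pd σ τ μ
        = -(1 / 2) * ((F σ τ μ) ⬝ᵥ (G μ)⁻¹.mulVec (F σ τ μ))
          - σ ⬝ᵥ b - τ ⬝ᵥ (1 : Fin n → ℝ))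
    (σbar : Fin m → ℝ) (τbar : Fin n → ℝ) (μbar : Fin K → ℝ)
    (hσ : 0 ≤ σbar) (hμ : 0 ≤ μbar)
    (hpos : (G μbar).PosDef)
    (ybar : Fin K → ℝ)
    (hybar : ybar = (G μbar)⁻¹.mulVec (F σbar τbar μbar))
    (hfeas1 : D.mulVec ybar ≤ b)
    (hfeas2 : H.mulVec ybar = (1 : Fin n → ℝ))
    (hfeas3 : ybar * (ybar - (1 : Fin K → ℝ)) ≤ 0)
    (hslack1 : σbar ⬝ᵥ (D.mulVec ybar - b) = 0)
    (hslack2 : μbar ⬝ᵥ (ybar * (ybar - (1 : Fin K → ℝ))) = 0) :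
    ∀ σ : Fin m → ℝ, 0 ≤ σ → ∀ τ : Fin n → ℝ, ∀ μ : Fin K → ℝ, 0 ≤ μ →
      (G μ).PosDef → Pd σ τ μ ≤ Pd σbar τbar μbar := by
  -- symmetry of G μ
  have hGsymm : ∀ μ : Fin K → ℝ, (G μ).IsSymm := by
    intro μ
    rw [hG]
    unfold Matrix.IsSymm
    rw [Matrix.transpose_add, Matrix.transpose_smul, Matrix.diagonal_transpose, hB.eq]
  -- the Lagrangian identity
  have hIdent : ∀ (σ : Fin m → ℝ) (τ : Fin n → ℝ) (μ : Fin K → ℝ),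
      (1 / 2) * (ybar ⬝ᵥ (G μ).mulVec ybar) - (F σ τ μ) ⬝ᵥ ybar
        - σ ⬝ᵥ b - τ ⬝ᵥ (1 : Fin n → ℝ)
      = (1 / 2) * (ybar ⬝ᵥ B.mulVec ybar) - h ⬝ᵥ ybar
        + σ ⬝ᵥ (D.mulVec ybar - b) + τ ⬝ᵥ (H.mulVec ybar - (1 : Fin n → ℝ))
        + μ ⬝ᵥ (ybar * (ybar - (1 : Fin K → ℝ))) := by
    intro σ τ μ
    have e1 : ybar ⬝ᵥ (G μ).mulVec ybar
        = ybar ⬝ᵥ B.mulVec ybar + 2 * (μ ⬝ᵥ (ybar * ybar)) := by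
      rw [hG, Matrix.add_mulVec, dotProduct_add, Matrix.smul_mulVec,
          dotProduct_smul, diag_quad, smul_eq_mul]
    have e2 : (F σ τ μ) ⬝ᵥ ybar
        = h ⬝ᵥ ybar - σ ⬝ᵥ (D.mulVec ybar) - τ ⬝ᵥ (H.mulVec ybar) + μ ⬝ᵥ ybar := by
      rw [hF, add_dotProduct, sub_dotProduct, sub_dotProduct,
          transpose_dot, transpose_dot]
    have e3 : μ ⬝ᵥ (ybar * (ybar - (1 : Fin K → ℝ)))
        = μ ⬝ᵥ (ybar * ybar) - μ ⬝ᵥ ybar := by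
      have : ybar * (ybar - (1 : Fin K → ℝ)) = ybar * ybar - ybar := by
        rw [mul_sub, mul_one]
      rw [this, dotProduct_sub]
    have e4 : σ ⬝ᵥ (D.mulVec ybar - b) = σ ⬝ᵥ (D.mulVec ybar) - σ ⬝ᵥ b :=
      dotProduct_sub σ _ _
    have e5 : τ ⬝ᵥ (H.mulVec ybar - (1 : Fin n → ℝ))
        = τ ⬝ᵥ (H.mulVec ybar) - τ ⬝ᵥ (1 : Fin n → ℝ) :=
      dotProduct_sub τ _ _
    rw [e1, e2, e3, e4, e5]; ring
  intro σ hσ' τ μ hμ' hpos'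
  -- upper bound at (σ,τ,μ)
  have hub : Pd σ τ μ ≤ (1 / 2) * (ybar ⬝ᵥ B.mulVec ybar) - h ⬝ᵥ ybar := by
    have hq := quad_bound (G μ) hpos' (hGsymm μ) (F σ τ μ) ybar
    have h1 : Pd σ τ μ ≤ (1 / 2) * (ybar ⬝ᵥ (G μ).mulVec ybar) - (F σ τ μ) ⬝ᵥ ybar
        - σ ⬝ᵥ b - τ ⬝ᵥ (1 : Fin n → ℝ) := by
      rw [hPd]; linarith
    rw [hIdent σ τ μ] at h1
    have hs1 : σ ⬝ᵥ (D.mulVec ybar - b) ≤ 0 :=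
      dot_nonpos σ _ hσ' (fun i => by simpa using sub_nonpos.mpr (hfeas1 i))
    have hs2 : τ ⬝ᵥ (H.mulVec ybar - (1 : Fin n → ℝ)) = 0 := by
      rw [hfeas2, sub_self, dotProduct_zero]
    have hs3 : μ ⬝ᵥ (ybar * (ybar - (1 : Fin K → ℝ))) ≤ 0 :=
      dot_nonpos μ _ hμ' hfeas3
    linarith
  -- exact value at (σ̄,τ̄,μ̄)
  have heq : Pd σbar τbar μbar = (1 / 2) * (ybar ⬝ᵥ B.mulVec ybar) - h ⬝ᵥ ybar := by
    have hq := quad_eq (G μbar) hpos (hGsymm μbar) (F σbar τbar μbar)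
    have h1 : Pd σbar τbar μbar
        = (1 / 2) * (ybar ⬝ᵥ (G μbar).mulVec ybar) - (F σbar τbar μbar) ⬝ᵥ ybar
          - σbar ⬝ᵥ b - τbar ⬝ᵥ (1 : Fin n → ℝ) := by
      rw [hPd, hq, ← hybar]
    rw [hIdent σbar τbar μbar] at h1
    have hs2 : τbar ⬝ᵥ (H.mulVec ybar - (1 : Fin n → ℝ)) = 0 := by
      rw [hfeas2, sub_self, dotProduct_zero]
    rw [h1, hslack1, hs2, hslack2]; ring
  rw [heq]; exact hub
end

section
/- (Concavity of the canonical dual function.) The function P^d(σ,τ,μ) = −½ F(σ,τ,μ)ᵀ G(μ)⁻¹ F(σ,τ,μ) − σᵀb − τᵀe_n is concave on the convex set {(σ,τ,μ) ∈ ℝ^m × ℝⁿ × ℝ^K : G(μ) is positive definite}. -/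
open Matrix

section Aux

variable {K : ℕ}

private lemma dot_symm (A : Matrix (Fin K) (Fin K) ℝ) (hs : A.IsSymm)
    (y u : Fin K → ℝ) : y ⬝ᵥ A *ᵥ u = u ⬝ᵥ A *ᵥ y := by
  rw [dotProduct_mulVec, ← hs, vecMul_transpose, dotProduct_comm, hs]

private lemma psd_key (A : Matrix (Fin K) (Fin K) ℝ) (hA : A.PosSemidef)
    (hs : A.IsSymm) (u y : Fin K → ℝ) :
    2 * (y ⬝ᵥ A *ᵥ u) - y ⬝ᵥ A *ᵥ y ≤ u ⬝ᵥ A *ᵥ u := by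
  have h0 := hA.dotProduct_mulVec_nonneg (u - y)
  rw [star_trivial] at h0
  have hexp : (u - y) ⬝ᵥ A *ᵥ (u - y)
      = u ⬝ᵥ A *ᵥ u - u ⬝ᵥ A *ᵥ y - y ⬝ᵥ A *ᵥ u + y ⬝ᵥ A *ᵥ y := by
    simp [mulVec_sub, dotProduct_sub, sub_dotProduct]
    ring
  have hsym := dot_symm A hs y u
  rw [hexp] at h0
  linarith

private lemma inv_key (A : Matrix (Fin K) (Fin K) ℝ) (hA : A.PosDef)
    (hs : A.IsSymm) (x y : Fin K → ℝ) :
    2 * (y ⬝ᵥ x) - y ⬝ᵥ A *ᵥ y ≤ x ⬝ᵥ A⁻¹ *ᵥ x := by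
  have hdet : IsUnit A.det := isUnit_iff_ne_zero.2 hA.det_pos.ne'
  have hAu : A *ᵥ (A⁻¹ *ᵥ x) = x := by
    rw [mulVec_mulVec, mul_nonsing_inv A hdet, one_mulVec]
  have := psd_key A hA.posSemidef hs (A⁻¹ *ᵥ x) y
  rw [hAu] at this
  calc 2 * (y ⬝ᵥ x) - y ⬝ᵥ A *ᵥ y ≤ (A⁻¹ *ᵥ x) ⬝ᵥ x := this
    _ = x ⬝ᵥ A⁻¹ *ᵥ x := dotProduct_comm _ _

private lemma posdef_combo (A1 A2 : Matrix (Fin K) (Fin K) ℝ)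
    (h1 : A1.PosDef) (h2 : A2.PosDef) (a b : ℝ) (ha : 0 ≤ a) (hb : 0 ≤ b)
    (hab : a + b = 1) : (a • A1 + b • A2).PosDef := by
  have s1 : A1ᵀ = A1 := by rw [← conjTranspose_eq_transpose_of_trivial]; exact h1.1
  have s2 : A2ᵀ = A2 := by rw [← conjTranspose_eq_transpose_of_trivial]; exact h2.1
  refine posDef_iff_dotProduct_mulVec.mpr ⟨?_, ?_⟩
  · rw [IsHermitian, conjTranspose_eq_transpose_of_trivial, transpose_add,
      transpose_smul, transpose_smul, s1, s2]
  · intro x hx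
    rw [star_trivial]
    have e : x ⬝ᵥ (a • A1 + b • A2) *ᵥ x
        = a * (x ⬝ᵥ A1 *ᵥ x) + b * (x ⬝ᵥ A2 *ᵥ x) := by
      simp [add_mulVec, smul_mulVec, dotProduct_add, dotProduct_smul]
    have p1 := h1.dotProduct_mulVec_pos hx
    have p2 := h2.dotProduct_mulVec_pos hx
    rw [star_trivial] at p1 p2
    rw [e]
    rcases eq_or_lt_of_le ha with ha' | ha'
    · have : b = 1 := by linarith
      nlinarith
    · nlinarith

private lemma frac_key (A1 A2 : Matrix (Fin K) (Fin K) ℝ)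
    (h1 : A1.PosDef) (s1 : A1.IsSymm) (h2 : A2.PosDef) (s2 : A2.IsSymm)
    (x1 x2 : Fin K → ℝ) (a b : ℝ) (ha : 0 ≤ a) (hb : 0 ≤ b) (hab : a + b = 1) :
    (a • x1 + b • x2) ⬝ᵥ (a • A1 + b • A2)⁻¹ *ᵥ (a • x1 + b • x2)
      ≤ a * (x1 ⬝ᵥ A1⁻¹ *ᵥ x1) + b * (x2 ⬝ᵥ A2⁻¹ *ᵥ x2) := by
  set A := a • A1 + b • A2 with hAdef
  set x := a • x1 + b • x2 with hxdef
  have hA : A.PosDef := posdef_combo A1 A2 h1 h2 a b ha hb hab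
  have hdet : IsUnit A.det := isUnit_iff_ne_zero.2 hA.det_pos.ne'
  set u := A⁻¹ *ᵥ x with hudef
  have hAu : A *ᵥ u = x := by
    rw [hudef, mulVec_mulVec, mul_nonsing_inv A hdet, one_mulVec]
  have hLHS : x ⬝ᵥ A⁻¹ *ᵥ x = 2 * (u ⬝ᵥ x) - u ⬝ᵥ A *ᵥ u := by
    rw [hAu, ← hudef, dotProduct_comm]
    ring
  have hx1 : u ⬝ᵥ x = a * (u ⬝ᵥ x1) + b * (u ⬝ᵥ x2) := by
    simp [hxdef, dotProduct_add, dotProduct_smul]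
  have hAx : u ⬝ᵥ A *ᵥ u = a * (u ⬝ᵥ A1 *ᵥ u) + b * (u ⬝ᵥ A2 *ᵥ u) := by
    simp [hAdef, add_mulVec, smul_mulVec, dotProduct_add, dotProduct_smul]
  have k1 := inv_key A1 h1 s1 x1 u
  have k2 := inv_key A2 h2 s2 x2 u
  have m1 : a * (2 * (u ⬝ᵥ x1) - u ⬝ᵥ A1 *ᵥ u) ≤ a * (x1 ⬝ᵥ A1⁻¹ *ᵥ x1) :=
    mul_le_mul_of_nonneg_left k1 ha
  have m2 : b * (2 * (u ⬝ᵥ x2) - u ⬝ᵥ A2 *ᵥ u) ≤ b * (x2 ⬝ᵥ A2⁻¹ *ᵥ x2) :=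
    mul_le_mul_of_nonneg_left k2 hb
  rw [hLHS, hx1, hAx]
  nlinarith [m1, m2]

end Aux

/-- Concavity of the canonical dual function
`P^d(σ,τ,μ) = −½ F(σ,τ,μ)ᵀ G(μ)⁻¹ F(σ,τ,μ) − σᵀb − τᵀeₙ` on the convex set
`{(σ,τ,μ) : G(μ) ≻ 0}`. -/
theorem stmt10
    (n m K : ℕ) (hn : 0 < n) (hm : 0 < m) (hK : 0 < K)
    (B : Matrix (Fin K) (Fin K) ℝ) (hB : B.IsSymm)
    (h : Fin K → ℝ) (D : Matrix (Fin m) (Fin K) ℝ) (b : Fin m → ℝ)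
    (H : Matrix (Fin n) (Fin K) ℝ)
    (G : (Fin K → ℝ) → Matrix (Fin K) (Fin K) ℝ)
    (hG : ∀ μ, G μ = B + (2 : ℝ) • Matrix.diagonal μ)
    (F : (Fin m → ℝ) → (Fin n → ℝ) → (Fin K → ℝ) → (Fin K → ℝ))
    (hF : ∀ σ τ μ, F σ τ μ = h - Dᵀ.mulVec σ - Hᵀ.mulVec τ + μ) :
    ConcaveOn ℝ
      {p : (Fin m → ℝ) × (Fin n → ℝ) × (Fin K → ℝ) | (G p.2.2).PosDef}
      (fun p => -(1 / 2) * ((F p.1 p.2.1 p.2.2) ⬝ᵥ (G p.2.2)⁻¹.mulVec (F p.1 p.2.1 p.2.2))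
        - p.1 ⬝ᵥ b - p.2.1 ⬝ᵥ (1 : Fin n → ℝ)) := by
  -- G is affine in μ, F is affine
  have hGcombo : ∀ (μ1 μ2 : Fin K → ℝ) (a c : ℝ), a + c = 1 →
      G (a • μ1 + c • μ2) = a • G μ1 + c • G μ2 := by
    intro μ1 μ2 a c hac
    have hd : Matrix.diagonal (a • μ1 + c • μ2)
        = a • Matrix.diagonal μ1 + c • Matrix.diagonal μ2 := by
      ext i j
      by_cases hij : i = j <;> simp [Matrix.diagonal, hij]
    rw [hG, hG, hG, hd]
    have hB' : B = (a + c) • B := by rw [hac, one_smul]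
    conv_lhs => rw [hB']
    module
  have hGsymm : ∀ μ, (G μ).IsSymm := by
    intro μ
    rw [hG]
    exact (hB.add ((isSymm_diagonal μ).smul (2 : ℝ)))
  have hFcombo : ∀ (σ1 σ2 : Fin m → ℝ) (τ1 τ2 : Fin n → ℝ) (μ1 μ2 : Fin K → ℝ)
      (a c : ℝ), a + c = 1 →
      F (a • σ1 + c • σ2) (a • τ1 + c • τ2) (a • μ1 + c • μ2)
        = a • F σ1 τ1 μ1 + c • F σ2 τ2 μ2 := by
    intro σ1 σ2 τ1 τ2 μ1 μ2 a c hac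
    rw [hF, hF, hF, mulVec_add, mulVec_smul, mulVec_smul, mulVec_add,
      mulVec_smul, mulVec_smul]
    have hh : h = (a + c) • h := by rw [hac, one_smul]
    conv_lhs => rw [hh]
    module
  constructor
  · -- convexity of the set
    intro p hp q hq a c ha hc hac
    simp only [Set.mem_setOf_eq] at *
    have h22 : (a • p + c • q).2.2 = a • p.2.2 + c • q.2.2 := rfl
    rw [h22, hGcombo _ _ _ _ hac]
    exact posdef_combo _ _ hp hq a c ha hc hac
  · intro p hp q hq a c ha hc hac
    simp only [Set.mem_setOf_eq] at hp hq
    have h1 : (a • p + c • q).1 = a • p.1 + c • q.1 := rfl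
    have h21 : (a • p + c • q).2.1 = a • p.2.1 + c • q.2.1 := rfl
    have h22 : (a • p + c • q).2.2 = a • p.2.2 + c • q.2.2 := rfl
    simp only [smul_eq_mul, h1, h21, h22]
    rw [hGcombo _ _ _ _ hac, hFcombo _ _ _ _ _ _ _ _ hac]
    have key := frac_key (G p.2.2) (G q.2.2) hp (hGsymm _) hq (hGsymm _)
      (F p.1 p.2.1 p.2.2) (F q.1 q.2.1 q.2.2) a c ha hc hac
    have lin1 : (a • p.1 + c • q.1) ⬝ᵥ b = a * (p.1 ⬝ᵥ b) + c * (q.1 ⬝ᵥ b) := by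
      simp [add_dotProduct, smul_dotProduct]
    have lin2 : (a • p.2.1 + c • q.2.1) ⬝ᵥ (1 : Fin n → ℝ)
        = a * (p.2.1 ⬝ᵥ (1 : Fin n → ℝ)) + c * (q.2.1 ⬝ᵥ (1 : Fin n → ℝ)) := by
      simp [add_dotProduct, smul_dotProduct]
    rw [lin1, lin2]
    nlinarith [key]
end

section
/- (Canonical duality for the quadratic perturbation example: global minimizer.) Let α > 0, λ > 0, f ∈ ℝⁿ, and define Π(x) = ½ α (½‖x‖² − λ)² − fᵀx for x ∈ ℝⁿ. If σ > 0 satisfies (α⁻¹σ + λ)σ² = ½‖f‖², then x̄ = σ⁻¹ f is a global minimizer of Π over ℝⁿ. -/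
open scoped RealInnerProductSpace

lemma key12 (α lam σ a F c : ℝ) (hα : 0 < α) (hσ : 0 < σ)
    (hc : c ≤ F * a) (heq : (α⁻¹ * σ + lam) * σ ^ 2 = (1 / 2) * F ^ 2) :
    (1 / 2) * α * ((1 / 2) * (σ⁻¹ * F) ^ 2 - lam) ^ 2 - σ⁻¹ * F ^ 2 ≤
      (1 / 2) * α * ((1 / 2) * a ^ 2 - lam) ^ 2 - c := by
  have hα' := hα.ne'
  have hσ' := hσ.ne'
  have hF2 : F ^ 2 = 2 * (σ ^ 3 / α + lam * σ ^ 2) := by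
    field_simp at heq ⊢; linarith
  have hF2' : α * F ^ 2 = 2 * σ ^ 3 + 2 * lam * σ ^ 2 * α := by
    field_simp at hF2; linarith
  have hLHS : (1 / 2) * α * ((1 / 2) * (σ⁻¹ * F) ^ 2 - lam) ^ 2 - σ⁻¹ * F ^ 2 =
      -(3 * σ ^ 2 / (2 * α)) - 2 * lam * σ := by
    have h1 : (σ⁻¹ * F) ^ 2 = F ^ 2 / σ ^ 2 := by field_simp
    rw [h1, hF2]; field_simp; ring
  rw [hLHS, ← sub_nonneg]
  have key : 0 ≤ 2 * α * σ *
      (((1 / 2) * α * ((1 / 2) * a ^ 2 - lam) ^ 2 - c) -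
        (-(3 * σ ^ 2 / (2 * α)) - 2 * lam * σ)) := by
    have e : 2 * α * σ *
        (((1 / 2) * α * ((1 / 2) * a ^ 2 - lam) ^ 2 - c) -
          (-(3 * σ ^ 2 / (2 * α)) - 2 * lam * σ)) =
        σ * (α * ((1 / 2) * a ^ 2 - lam) - σ) ^ 2 + α * (σ * a - F) ^ 2 +
          2 * α * σ * (F * a - c) := by
      field_simp
      linear_combination (-4) * hF2'
    rw [e]
    have t1 : 0 ≤ σ * (α * ((1 / 2) * a ^ 2 - lam) - σ) ^ 2 := by positivity
    have t2 : 0 ≤ α * (σ * a - F) ^ 2 := by positivity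
    have t3 : 0 ≤ 2 * α * σ * (F * a - c) := by
      apply mul_nonneg (by positivity) (by linarith)
    linarith
  have hpos : (0 : ℝ) < 2 * α * σ := by positivity
  nlinarith [key, hpos]

/-- For the nonconvex example `Π(x) = ½α(½‖x‖² − λ)² − fᵀx`, if `σ > 0`
solves the dual algebraic equation `(α⁻¹σ + λ)σ² = ½‖f‖²`, then `x̄ = σ⁻¹f` is a global
minimizer of `Π` over `ℝⁿ`. -/
theorem stmt12
    (n : ℕ) (α lam : ℝ) (hα : 0 < α) (hlam : 0 < lam)
    (f : EuclideanSpace ℝ (Fin n))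
    (Pi : EuclideanSpace ℝ (Fin n) → ℝ)
    (hPi : ∀ x, Pi x = (1 / 2) * α * ((1 / 2) * ‖x‖ ^ 2 - lam) ^ 2 - ⟪f, x⟫)
    (σ : ℝ) (hσ : 0 < σ)
    (heq : (α⁻¹ * σ + lam) * σ ^ 2 = (1 / 2) * ‖f‖ ^ 2) :
    ∀ x : EuclideanSpace ℝ (Fin n), Pi (σ⁻¹ • f) ≤ Pi x := by
  intro x
  rw [hPi, hPi]
  have hnorm : ‖σ⁻¹ • f‖ = σ⁻¹ * ‖f‖ := by
    rw [norm_smul, Real.norm_eq_abs, abs_of_pos (inv_pos.mpr hσ)]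
  have hinner : ⟪f, σ⁻¹ • f⟫ = σ⁻¹ * ‖f‖ ^ 2 := by
    rw [real_inner_smul_right, real_inner_self_eq_norm_sq]
  rw [hnorm, hinner]
  have := key12 α lam σ ‖x‖ ‖f‖ ⟪f, x⟫ hα hσ (real_inner_le_norm f x) heq
  calc (1 / 2) * α * ((1 / 2) * (σ⁻¹ * ‖f‖) ^ 2 - lam) ^ 2 - σ⁻¹ * ‖f‖ ^ 2
      ≤ _ := this
end

section
/- (Complementary-dual equality for the example.) Let α > 0, λ > 0, f ∈ ℝⁿ, Π(x) = ½ α (½‖x‖² − λ)² − fᵀx, and Π^d(σ) = −‖f‖²/(2σ) − σ²/(2α) − λσ for σ ≠ 0. If σ ≠ 0 satisfies the dual algebraic equation (α⁻¹σ + λ)σ² = ½‖f‖², then Π(σ⁻¹ f) = Π^d(σ). -/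
open scoped RealInnerProductSpace

/-- Complementary-dual equality for the example: if `σ ≠ 0` solves the
dual algebraic equation `(α⁻¹σ + λ)σ² = ½‖f‖²`, then `Π(σ⁻¹f) = Π^d(σ)`, where
`Π^d(σ) = −‖f‖²/(2σ) − σ²/(2α) − λσ`. -/
theorem stmt13
    (n : ℕ) (α lam : ℝ) (hα : 0 < α) (hlam : 0 < lam)
    (f : EuclideanSpace ℝ (Fin n))
    (Pi : EuclideanSpace ℝ (Fin n) → ℝ)
    (hPi : ∀ x, Pi x = (1 / 2) * α * ((1 / 2) * ‖x‖ ^ 2 - lam) ^ 2 - ⟪f, x⟫)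
    (Pid : ℝ → ℝ)
    (hPid : ∀ σ : ℝ, σ ≠ 0 → Pid σ = -‖f‖ ^ 2 / (2 * σ) - σ ^ 2 / (2 * α) - lam * σ)
    (σ : ℝ) (hσ : σ ≠ 0)
    (heq : (α⁻¹ * σ + lam) * σ ^ 2 = (1 / 2) * ‖f‖ ^ 2) :
    Pi (σ⁻¹ • f) = Pid σ := by
  rw [hPi, hPid σ hσ, real_inner_smul_right, real_inner_self_eq_norm_sq, norm_smul]
  have hf : ‖f‖ ^ 2 = 2 * (α⁻¹ * σ + lam) * σ ^ 2 := by linarith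
  rw [mul_pow, hf]
  have hα' : α ≠ 0 := ne_of_gt hα
  simp only [norm_inv, Real.norm_eq_abs, inv_pow, sq_abs]
  field_simp
  ring
end

section
/- (Critical point correspondence for the example.) Let α > 0, λ > 0, and f ∈ ℝⁿ with f ≠ 0, and define Π(x) = ½ α (½‖x‖² − λ)² − fᵀx. Then x ∈ ℝⁿ satisfies the criticality condition α(½‖x‖² − λ)x = f if and only if there exists σ ≠ 0 with (α⁻¹σ + λ)σ² = ½‖f‖² and x = σ⁻¹ f. -/
open scoped RealInnerProductSpace

/-- Critical point correspondence for the example: when `f ≠ 0`,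
`x` solves the criticality condition `α(½‖x‖² − λ)x = f` iff `x = σ⁻¹f` for some
`σ ≠ 0` solving the dual algebraic equation `(α⁻¹σ + λ)σ² = ½‖f‖²`. -/
theorem stmt14
    (n : ℕ) (α lam : ℝ) (hα : 0 < α) (hlam : 0 < lam)
    (f : EuclideanSpace ℝ (Fin n)) (hf : f ≠ 0)
    (x : EuclideanSpace ℝ (Fin n)) :
    (α * ((1 / 2) * ‖x‖ ^ 2 - lam)) • x = f
      ↔ ∃ σ : ℝ, σ ≠ 0 ∧ (α⁻¹ * σ + lam) * σ ^ 2 = (1 / 2) * ‖f‖ ^ 2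
          ∧ x = σ⁻¹ • f := by
  constructor
  · intro h
    set σ : ℝ := α * ((1 / 2) * ‖x‖ ^ 2 - lam) with hσ
    have hσ0 : σ ≠ 0 := by
      intro h0
      apply hf
      rw [← h, h0, zero_smul]
    refine ⟨σ, hσ0, ?_, ?_⟩
    · have hn : ‖f‖ ^ 2 = σ ^ 2 * ‖x‖ ^ 2 := by
        rw [← h, norm_smul, mul_pow, Real.norm_eq_abs, sq_abs]
      rw [hn, hσ]
      field_simp
      ring
    · rw [← h, smul_smul, inv_mul_cancel₀ hσ0, one_smul]
  · rintro ⟨σ, hσ0, heq, rfl⟩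
    have hnx : ‖σ⁻¹ • f‖ ^ 2 = σ⁻¹ ^ 2 * ‖f‖ ^ 2 := by
      rw [norm_smul, mul_pow, Real.norm_eq_abs, sq_abs]
    have hc : α * ((1 / 2) * ‖(σ⁻¹ • f : EuclideanSpace ℝ (Fin n))‖ ^ 2 - lam) = σ := by
      rw [hnx]
      have hα' : α ≠ 0 := hα.ne'
      field_simp at heq ⊢
      nlinarith [heq]
    rw [hc, smul_smul, mul_inv_cancel₀ hσ0, one_smul]
end

section
/- (Strong duality for the example.) Let α > 0, λ > 0, and f ∈ ℝⁿ with f ≠ 0. Then there exists a unique σ₁ > 0 satisfying (α⁻¹σ + λ)σ² = ½‖f‖²; moreover σ₁ is the unique global maximizer of Π^d(σ) = −‖f‖²/(2σ) − σ²/(2α) − λσ on (0,∞), and min_{x ∈ ℝⁿ} Π(x) = Π^d(σ₁), where Π(x) = ½ α (½‖x‖² − λ)² − fᵀx. -/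
set_option maxHeartbeats 1000000


open scoped RealInnerProductSpace

/-- Strong duality for the example: for `f ≠ 0` there is a unique
`σ₁ > 0` solving `(α⁻¹σ + λ)σ² = ½‖f‖²`; it is the unique global maximizer of
`Π^d` on `(0,∞)`, and `min_{x ∈ ℝⁿ} Π(x) = Π^d(σ₁)`. -/
theorem stmt16
    (n : ℕ) (α lam : ℝ) (hα : 0 < α) (hlam : 0 < lam)
    (f : EuclideanSpace ℝ (Fin n)) (hf : f ≠ 0)
    (Pi : EuclideanSpace ℝ (Fin n) → ℝ)
    (hPi : ∀ x, Pi x = (1 / 2) * α * ((1 / 2) * ‖x‖ ^ 2 - lam) ^ 2 - ⟪f, x⟫)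
    (Pid : ℝ → ℝ)
    (hPid : ∀ σ : ℝ, σ ≠ 0 → Pid σ = -‖f‖ ^ 2 / (2 * σ) - σ ^ 2 / (2 * α) - lam * σ) :
    ∃ σ₁ : ℝ, 0 < σ₁
      ∧ (α⁻¹ * σ₁ + lam) * σ₁ ^ 2 = (1 / 2) * ‖f‖ ^ 2
      -- uniqueness of the positive root
      ∧ (∀ σ : ℝ, 0 < σ → (α⁻¹ * σ + lam) * σ ^ 2 = (1 / 2) * ‖f‖ ^ 2 → σ = σ₁)
      -- σ₁ is a global maximizer of Π^d on (0,∞)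
      ∧ (∀ σ : ℝ, 0 < σ → Pid σ ≤ Pid σ₁)
      -- and it is the unique such maximizer
      ∧ (∀ σ : ℝ, 0 < σ → Pid σ = Pid σ₁ → σ = σ₁)
      -- strong duality: the minimum of Π over ℝⁿ equals Π^d(σ₁)
      ∧ IsLeast (Set.range Pi) (Pid σ₁) := by
  have ha : (0:ℝ) < α⁻¹ := inv_pos.mpr hα
  have hαne : α ≠ 0 := ne_of_gt hα
  set F : ℝ := ‖f‖ with hFdef
  have hF0 : 0 < F := norm_pos_iff.mpr hf
  clear_value F
  -- choose a right endpoint M for the IVT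
  obtain ⟨M, hM1, hMlam⟩ : ∃ M : ℝ, 1 ≤ M ∧ (1/2) * F ^ 2 ≤ lam * M := by
    refine ⟨F ^ 2 / (2 * lam) + 1, ?_, ?_⟩
    · have : 0 ≤ F ^ 2 / (2 * lam) := by positivity
      linarith
    · have h0 : lam * (F ^ 2 / (2 * lam) + 1) = F ^ 2 / 2 + lam := by
        field_simp
      rw [h0]; linarith
  have hM0 : (0:ℝ) ≤ M := le_trans zero_le_one hM1
  have hgc : ContinuousOn (fun σ : ℝ => (α⁻¹ * σ + lam) * σ ^ 2) (Set.Icc 0 M) := by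
    fun_prop
  have hmem : (1/2) * F ^ 2 ∈
      Set.Icc ((fun σ : ℝ => (α⁻¹ * σ + lam) * σ ^ 2) 0)
        ((fun σ : ℝ => (α⁻¹ * σ + lam) * σ ^ 2) M) := by
    constructor
    · have e0 : (fun σ : ℝ => (α⁻¹ * σ + lam) * σ ^ 2) 0 = 0 := by norm_num
      rw [e0]; positivity
    · show (1/2) * F ^ 2 ≤ (α⁻¹ * M + lam) * M ^ 2
      have hMM : lam * M ≤ lam * M ^ 2 := by
        nlinarith [mul_nonneg (mul_nonneg hlam.le (le_trans zero_le_one hM1))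
          (sub_nonneg.mpr hM1)]
      have hαM : (0:ℝ) ≤ α⁻¹ * M * M ^ 2 := by positivity
      nlinarith
  obtain ⟨σ₁, hσmem, hroot⟩ := intermediate_value_Icc hM0 hgc hmem
  simp only at hroot
  have hσ₁ : 0 < σ₁ := by
    rcases lt_or_eq_of_le hσmem.1 with h | h
    · exact h
    · exfalso
      rw [← h] at hroot
      simp at hroot
      nlinarith
  have hσ₁ne : σ₁ ≠ 0 := ne_of_gt hσ₁
  have hroot' : (α⁻¹ * σ₁ + lam) * σ₁ ^ 2 = (1/2) * F ^ 2 := hroot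
  have h2 : F ^ 2 = 2 * α⁻¹ * σ₁ ^ 3 + 2 * lam * σ₁ ^ 2 := by
    linear_combination (-2 : ℝ) * hroot'
  -- uniqueness of positive root
  have huniq : ∀ σ : ℝ, 0 < σ → (α⁻¹ * σ + lam) * σ ^ 2 = (1/2) * F ^ 2 → σ = σ₁ := by
    intro σ hσ hσe
    by_contra hne
    rcases lt_or_gt_of_ne hne with h | h
    · have hq : (0:ℝ) < σ₁ ^ 2 + σ * σ₁ + σ ^ 2 := by
        nlinarith [mul_pos hσ hσ₁, mul_pos hσ hσ, mul_pos hσ₁ hσ₁]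
      have h3 : σ ^ 3 < σ₁ ^ 3 := by nlinarith [mul_pos (sub_pos.mpr h) hq]
      have h4 : σ ^ 2 < σ₁ ^ 2 := by nlinarith
      nlinarith [mul_lt_mul_of_pos_left h3 ha, mul_lt_mul_of_pos_left h4 hlam]
    · have hq : (0:ℝ) < σ ^ 2 + σ₁ * σ + σ₁ ^ 2 := by
        nlinarith [mul_pos hσ hσ₁, mul_pos hσ hσ, mul_pos hσ₁ hσ₁]
      have h3 : σ₁ ^ 3 < σ ^ 3 := by nlinarith [mul_pos (sub_pos.mpr h) hq]
      have h4 : σ₁ ^ 2 < σ ^ 2 := by nlinarith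
      nlinarith [mul_lt_mul_of_pos_left h3 ha, mul_lt_mul_of_pos_left h4 hlam]
  -- key identity for the dual function
  have key : ∀ σ : ℝ, 0 < σ →
      (-F ^ 2 / (2 * σ₁) - σ₁ ^ 2 / (2 * α) - lam * σ₁) -
      (-F ^ 2 / (2 * σ) - σ ^ 2 / (2 * α) - lam * σ)
      = (σ₁ - σ) ^ 2 * ((2 * σ₁ + σ) + 2 * α * lam) / (2 * α * σ) := by
    intro σ hσ
    have hσne : σ ≠ 0 := ne_of_gt hσ
    have hαne : α ≠ 0 := ne_of_gt hα
    rw [h2]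
    field_simp
    ring
  have hmax : ∀ σ : ℝ, 0 < σ → Pid σ ≤ Pid σ₁ := by
    intro σ hσ
    rw [hPid σ (ne_of_gt hσ), hPid σ₁ hσ₁ne]
    have hk := key σ hσ
    have hpos : 0 ≤ (σ₁ - σ) ^ 2 * ((2 * σ₁ + σ) + 2 * α * lam) / (2 * α * σ) := by
      apply div_nonneg
      · apply mul_nonneg (sq_nonneg _)
        nlinarith
      · positivity
    linarith [hk]
  have hmaxu : ∀ σ : ℝ, 0 < σ → Pid σ = Pid σ₁ → σ = σ₁ := by
    intro σ hσ heq
    by_contra hne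
    have hk := key σ hσ
    have hP1 := hPid σ (ne_of_gt hσ)
    have hP2 := hPid σ₁ hσ₁ne
    rw [← hP1, ← hP2, heq, sub_self] at hk
    have hsq : 0 < (σ₁ - σ) ^ 2 := by
      have : σ₁ - σ ≠ 0 := sub_ne_zero.mpr (Ne.symm hne)
      positivity
    have : 0 < (σ₁ - σ) ^ 2 * ((2 * σ₁ + σ) + 2 * α * lam) / (2 * α * σ) := by
      apply div_pos
      · apply mul_pos hsq; nlinarith
      · positivity
    linarith
  refine ⟨σ₁, hσ₁, hroot', huniq, hmax, hmaxu, ?_, ?_⟩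
  · -- membership: attained at x = σ₁⁻¹ • f
    refine ⟨σ₁⁻¹ • f, ?_⟩
    have hnorm2 : ‖σ₁⁻¹ • f‖ ^ 2 = σ₁⁻¹ ^ 2 * F ^ 2 := by
      rw [norm_smul, Real.norm_eq_abs, abs_of_pos (inv_pos.mpr hσ₁), ← hFdef]
      ring
    have hinner : ⟪f, σ₁⁻¹ • f⟫ = σ₁⁻¹ * F ^ 2 := by
      rw [real_inner_smul_right, real_inner_self_eq_norm_sq, ← hFdef]
    rw [hPi, hPid σ₁ hσ₁ne, hnorm2, hinner, h2]
    field_simp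
    ring
  · -- lower bound
    rintro y ⟨x, rfl⟩
    rw [hPi, hPid σ₁ hσ₁ne]
    have hinner : ⟪f, x⟫ ≤ F * ‖x‖ := by
      rw [hFdef]; exact real_inner_le_norm f x
    set t : ℝ := ‖x‖ with ht
    have ht0 : 0 ≤ t := norm_nonneg x
    have h2' : α * F ^ 2 = 2 * σ₁ ^ 3 + 2 * lam * σ₁ ^ 2 * α := by
      have h := hroot'
      rw [inv_eq_one_div] at h
      field_simp at h
      linarith
    have hlam_eq : lam = F ^ 2 / (2 * σ₁ ^ 2) - σ₁ / α := by
      field_simp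
      linarith [h2']
    have main : -F ^ 2 / (2 * σ₁) - σ₁ ^ 2 / (2 * α) - lam * σ₁
        ≤ (1/2) * α * ((1/2) * t ^ 2 - lam) ^ 2 - F * t := by
      rw [hlam_eq]
      have hident : ((1/2) * α * ((1/2) * t ^ 2 - (F ^ 2 / (2 * σ₁ ^ 2) - σ₁ / α)) ^ 2 - F * t) -
          (-F ^ 2 / (2 * σ₁) - σ₁ ^ 2 / (2 * α) - (F ^ 2 / (2 * σ₁ ^ 2) - σ₁ / α) * σ₁)
          = (σ₁ * t - F) ^ 2 * (α * (σ₁ * t + F) ^ 2 + 4 * σ₁ ^ 3) / (8 * σ₁ ^ 4) := by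
        field_simp
        ring
      have hpos : 0 ≤ (σ₁ * t - F) ^ 2 * (α * (σ₁ * t + F) ^ 2 + 4 * σ₁ ^ 3) / (8 * σ₁ ^ 4) := by
        positivity
      linarith
    linarith
end
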